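/- arXiv:1806.09468 — 6 statements merged into one kernel-verified Lean document; each statement's English description precedes it below -/
import Mathlib

section
/- Let n be a nonnegative integer and let f(t) = Σ_{m=0}^{∞} c_m t^m be a power series with complex coefficients converging on a disk of radius R > n. Then the series Σ_{m=0}^{∞} c_m S(m,n) converges and Σ_{k=0}^{n} C(n,k) (-1)^k f(k) = (-1)^n · n! · Σ_{m=0}^{∞} c_m S(m,n). -/
open Finset

/-- The Stirling number of the second kind `S(m,n)`, defined (as a complex number) by
`n! * S(m,n) = ∑ k ∈ range (n+1), (-1)^(n-k) * C(n,k) * k^m` (with `(0:ℂ)^0 = 1`). -/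
noncomputable def stirling2 (m n : ℕ) : ℂ :=
  (n.factorial : ℂ)⁻¹ *
    ∑ k ∈ range (n + 1), (-1) ^ (n - k) * (n.choose k : ℂ) * (k : ℂ) ^ m

/-- Let `n` be a nonnegative integer and `f(t) = ∑ c_m t^m` a power series with complex
coefficients converging on a disk of radius `R > n`. Then `∑ c_m S(m,n)` converges and
`∑ k ∈ range (n+1), C(n,k) * (-1)^k * f(k) = (-1)^n * n! * ∑' m, c_m * S(m,n)`. -/
theorem alternating_binomial_analytic_sum_eq_stirling (n : ℕ) (R : ℝ) (hR : (n : ℝ) < R)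
    (c : ℕ → ℂ) (f : ℂ → ℂ)
    (hf : ∀ z : ℂ, ‖z‖ < R → HasSum (fun m : ℕ => c m * z ^ m) (f z)) :
    Summable (fun m : ℕ => c m * stirling2 m n) ∧
    ∑ k ∈ range (n + 1), (n.choose k : ℂ) * (-1) ^ k * f (k : ℂ) =
      (-1) ^ n * (n.factorial : ℂ) * ∑' m : ℕ, c m * stirling2 m n := by
  have hfact : (n.factorial : ℂ) ≠ 0 := by exact_mod_cast n.factorial_ne_zero
  have hk : ∀ k ∈ range (n + 1), HasSum (fun m : ℕ => c m * (k : ℂ) ^ m) (f k) := by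
    intro k hkmem
    apply hf
    rw [Complex.norm_natCast]
    exact lt_of_le_of_lt (Nat.cast_le.mpr (Nat.lt_succ_iff.mp (mem_range.mp hkmem))) hR
  -- the combined sum
  have hsum : HasSum (fun m : ℕ => ∑ k ∈ range (n + 1),
        (n.choose k : ℂ) * (-1) ^ k * (c m * (k : ℂ) ^ m))
      (∑ k ∈ range (n + 1), (n.choose k : ℂ) * (-1) ^ k * f (k : ℂ)) := by
    apply hasSum_sum
    intro k hkmem
    exact (hk k hkmem).mul_left _
  have key : ∀ m : ℕ, (∑ k ∈ range (n + 1),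
        (n.choose k : ℂ) * (-1) ^ k * (c m * (k : ℂ) ^ m))
      = (-1) ^ n * (n.factorial : ℂ) * (c m * stirling2 m n) := by
    intro m
    rw [stirling2]
    rw [show (-1 : ℂ) ^ n * (n.factorial : ℂ) * (c m * ((n.factorial : ℂ)⁻¹ *
        ∑ k ∈ range (n + 1), (-1) ^ (n - k) * (n.choose k : ℂ) * (k : ℂ) ^ m))
      = (-1 : ℂ) ^ n * (c m * ∑ k ∈ range (n + 1),
        (-1) ^ (n - k) * (n.choose k : ℂ) * (k : ℂ) ^ m) by
        field_simp]
    rw [Finset.mul_sum, Finset.mul_sum]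
    apply Finset.sum_congr rfl
    intro k hkmem
    have hkn : k ≤ n := Nat.lt_succ_iff.mp (mem_range.mp hkmem)
    have hpow : (-1 : ℂ) ^ n * (-1 : ℂ) ^ (n - k) = (-1 : ℂ) ^ k := by
      have he : n + (n - k) = 2 * (n - k) + k := by omega
      rw [← pow_add, he, pow_add, pow_mul]
      simp
    calc (n.choose k : ℂ) * (-1) ^ k * (c m * (k : ℂ) ^ m)
        = (n.choose k : ℂ) * ((-1 : ℂ) ^ n * (-1 : ℂ) ^ (n - k)) * (c m * (k : ℂ) ^ m) := by
          rw [hpow]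
      _ = (-1 : ℂ) ^ n * (c m * ((-1) ^ (n - k) * (n.choose k : ℂ) * (k : ℂ) ^ m)) := by ring
  have hsum' : HasSum (fun m : ℕ => (-1 : ℂ) ^ n * (n.factorial : ℂ) * (c m * stirling2 m n))
      (∑ k ∈ range (n + 1), (n.choose k : ℂ) * (-1) ^ k * f (k : ℂ)) := by
    convert hsum using 2 with m
    exact (key m).symm
  have hconst : ((-1 : ℂ) ^ n * (n.factorial : ℂ)) ≠ 0 := by
    apply mul_ne_zero _ hfact
    simp [pow_ne_zero]
  have hsum2 : HasSum (fun m : ℕ => c m * stirling2 m n)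
      (((-1 : ℂ) ^ n * (n.factorial : ℂ))⁻¹ *
        ∑ k ∈ range (n + 1), (n.choose k : ℂ) * (-1) ^ k * f (k : ℂ)) := by
    have := hsum'.mul_left ((-1 : ℂ) ^ n * (n.factorial : ℂ))⁻¹
    convert this using 2 with m
    · rfl
    rw [← mul_assoc, inv_mul_cancel₀ hconst, one_mul]
  refine ⟨hsum2.summable, ?_⟩
  rw [hsum2.tsum_eq, ← mul_assoc, mul_inv_cancel₀ hconst, one_mul]
end

section
/- For every nonnegative integer n, Σ_{k=0}^{n} C(n,k) (-1)^k k^{n+1} = (-1)^n · (n/2) · (n+1)!. -/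
open Finset


noncomputable def Faux (n m : ℕ) : ℂ :=
  ∑ k ∈ range (n + 1), (n.choose k : ℂ) * (-1) ^ k * (k : ℂ) ^ m

lemma Faux_rec (n m : ℕ) :
    Faux (n + 1) m = Faux n m - ∑ i ∈ range (m + 1), (m.choose i : ℂ) * Faux n i := by
  have h1 : ∀ k : ℕ, ((k : ℂ) + 1) ^ m = ∑ i ∈ range (m + 1), (m.choose i : ℂ) * (k : ℂ) ^ i := by
    intro k
    rw [add_pow]
    exact Finset.sum_congr rfl fun i _ => by ring
  have h2 : ∑ i ∈ range (m + 1), (m.choose i : ℂ) * Faux n i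
      = ∑ k ∈ range (n + 1), (n.choose k : ℂ) * (-1) ^ k * ((k : ℂ) + 1) ^ m := by
    unfold Faux
    simp_rw [Finset.mul_sum]
    rw [Finset.sum_comm]
    refine Finset.sum_congr rfl fun k _ => ?_
    rw [h1 k, Finset.mul_sum]
    exact Finset.sum_congr rfl fun i _ => by ring
  rw [h2]
  have e1 : Faux n m
      = (∑ j ∈ range (n + 1), (n.choose (j+1) : ℂ) * (-1) ^ (j+1) * ((j:ℂ)+1) ^ m)
        + (0:ℂ) ^ m := by
    have e0 : ∑ k ∈ range (n + 2), (n.choose k : ℂ) * (-1) ^ k * (k : ℂ) ^ m = Faux n m := by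
      unfold Faux
      rw [Finset.sum_range_succ]
      simp
    rw [← e0, Finset.sum_range_succ' (fun k => (n.choose k : ℂ) * (-1) ^ k * (k : ℂ) ^ m) (n+1)]
    simp
  have e2 : Faux (n+1) m
      = (∑ j ∈ range (n + 1), ((n+1).choose (j+1) : ℂ) * (-1) ^ (j+1) * ((j:ℂ)+1) ^ m)
        + (0:ℂ) ^ m := by
    unfold Faux
    rw [Finset.sum_range_succ' (fun k => ((n+1).choose k : ℂ) * (-1) ^ k * (k : ℂ) ^ m) (n+1)]
    simp
  rw [e1, e2]
  have key : ∑ j ∈ range (n + 1), ((n+1).choose (j+1) : ℂ) * (-1) ^ (j+1) * ((j:ℂ)+1) ^ m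
      = ∑ j ∈ range (n + 1), ((n.choose (j+1) : ℂ) * (-1) ^ (j+1) * ((j:ℂ)+1) ^ m
          - (n.choose j : ℂ) * (-1) ^ j * ((j:ℂ)+1) ^ m) := by
    refine Finset.sum_congr rfl fun j _ => ?_
    rw [Nat.choose_succ_succ']
    push_cast
    ring
  rw [key, Finset.sum_sub_distrib]
  ring

lemma Faux_main : ∀ n : ℕ,
    (∀ m, m < n → Faux n m = 0) ∧
    Faux n n = (-1) ^ n * (n.factorial : ℂ) ∧
    Faux n (n + 1) = (-1) ^ n * (n : ℂ) * ((n + 1).factorial : ℂ) / 2 := by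
  intro n
  induction n with
  | zero =>
    refine ⟨fun m hm => absurd hm (by omega), ?_, ?_⟩ <;> simp [Faux]
  | succ n ih =>
    obtain ⟨hlt, hdiag, hsucc⟩ := ih
    have hlt' : ∀ m, m < n + 1 → Faux (n + 1) m = 0 := by
      intro m hm
      rw [Faux_rec]
      rcases lt_or_eq_of_le (Nat.lt_succ_iff.mp hm) with h | h
      · rw [hlt m h, Finset.sum_eq_zero, sub_zero]
        intro i hi
        rw [hlt i (lt_of_lt_of_le (Finset.mem_range.mp hi) (by omega)), mul_zero]
      · subst h
        rw [Finset.sum_range_succ, Finset.sum_eq_zero, Nat.choose_self]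
        · ring
        · intro i hi
          rw [hlt i (Finset.mem_range.mp hi), mul_zero]
    refine ⟨hlt', ?_, ?_⟩
    · rw [Faux_rec, Finset.sum_range_succ, Finset.sum_range_succ, Finset.sum_eq_zero
        (fun i hi => by rw [hlt i (Finset.mem_range.mp hi), mul_zero]), hdiag, hsucc,
        Nat.choose_self, Nat.choose_succ_self_right]
      push_cast [Nat.factorial_succ]
      ring
    · rw [Faux_rec, Finset.sum_range_succ, Finset.sum_range_succ, Finset.sum_range_succ,
        Finset.sum_eq_zero (fun i hi => by rw [hlt i (Finset.mem_range.mp hi), mul_zero]),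
        hdiag, hsucc, Nat.choose_self]
      have hc1 : ((n + 2).choose (n + 1) : ℂ) = (n : ℂ) + 2 := by
        rw [Nat.choose_succ_self_right]; push_cast; ring
      have hc2 : ((n + 2).choose n : ℂ) * 2 = ((n : ℂ) + 1) * ((n : ℂ) + 2) := by
        have : (n + 2).choose n = (n + 2).choose 2 := by
          rw [← Nat.choose_symm (by omega)]; congr 1; omega
        rw [this]
        have h2 : (n + 2).choose 2 * 2 = (n + 2) * (n + 1) := by
          rw [Nat.choose_two_right, show n + 2 - 1 = n + 1 from rfl]
          have hd : 2 ∣ (n + 2) * (n + 1) := by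
            have := (Nat.even_mul_succ_self (n + 1)).two_dvd
            rwa [mul_comm] at this
          rw [Nat.div_mul_cancel hd]
        calc ((n + 2).choose 2 : ℂ) * 2 = (((n + 2).choose 2 * 2 : ℕ) : ℂ) := by push_cast; ring
          _ = ((n : ℂ) + 1) * ((n : ℂ) + 2) := by rw [h2]; push_cast; ring
      -- goal: Faux n (n+2) - (... + hc2-term + hc1-term + Faux n (n+2)) = ...
      push_cast [Nat.factorial_succ]
      field_simp
      rw [show n + 1 + 1 = n + 2 from rfl, pow_succ]
      linear_combination (-(1:ℂ))^(n+1) * (n.factorial : ℂ) * hc2 - (n.factorial : ℂ) * (n : ℂ) * ((n : ℂ) + 1) * (-1 : ℂ) ^ n * hc1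

/-- For every nonnegative integer `n`,
`∑ k in range (n+1), C(n,k) * (-1)^k * k^(n+1) = (-1)^n * (n/2) * (n+1)!`. -/
theorem alternating_binomial_power_succ_sum (n : ℕ) :
    ∑ k ∈ range (n + 1), (n.choose k : ℂ) * (-1) ^ k * (k : ℂ) ^ (n + 1) =
      (-1) ^ n * ((n : ℂ) / 2) * ((n + 1).factorial : ℂ) := by
  have := (Faux_main n).2.2
  unfold Faux at this
  rw [this]
  ring
end

section
/- For every nonnegative integer m and every complex number x, the series Σ_{k=0}^{∞} k^m x^k / k! converges and equals e^x · Σ_{n=0}^{m} S(m,n) x^n. (Equivalently, applying the operator x·d/dx m times to e^x yields φ_m(x)·e^x, where φ_m(x) = Σ_{n=0}^{m} S(m,n) x^n is the m-th exponential polynomial.) -/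
open Finset

noncomputable def D (n m : ℕ) : ℂ :=
  ∑ j ∈ range (n + 1), (-1) ^ j * (n.choose j : ℂ) * (j : ℂ) ^ m

lemma D_succ (n m : ℕ) :
    D (n + 1) m = -∑ t ∈ range m, (m.choose t : ℂ) * D n t := by
  have hbin : ∀ j : ℕ, ((j : ℂ) + 1) ^ m = ∑ t ∈ range (m + 1), (j : ℂ) ^ t * (m.choose t : ℂ) := by
    intro j; simpa using add_pow (j : ℂ) 1 m
  have hA : ∑ j ∈ range (n + 1), (-1 : ℂ) ^ j * (n.choose j : ℂ) * ((j : ℂ) + 1) ^ m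
      = ∑ t ∈ range (m + 1), (m.choose t : ℂ) * D n t := by
    simp_rw [hbin, mul_sum]
    rw [sum_comm]
    unfold D
    simp_rw [mul_sum]
    exact sum_congr rfl fun t _ => sum_congr rfl fun j _ => by ring
  have hB : ∑ j ∈ range (n + 1), (-1 : ℂ) ^ j * (n.choose (j + 1) : ℂ) * ((j : ℂ) + 1) ^ m
      = -(D n m - (0 : ℂ) ^ m) := by
    have h1 : ∑ j ∈ range (n + 2), (-1 : ℂ) ^ j * (n.choose j : ℂ) * (j : ℂ) ^ m = D n m := by
      rw [sum_range_succ]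
      simp [D]
    rw [sum_range_succ'] at h1
    have h2 : ∀ j : ℕ, (-1 : ℂ) ^ (j + 1) * (n.choose (j + 1) : ℂ) * ((j + 1 : ℕ) : ℂ) ^ m
        = -((-1 : ℂ) ^ j * (n.choose (j + 1) : ℂ) * ((j : ℂ) + 1) ^ m) := by
      intro j; push_cast; ring
    simp_rw [h2] at h1
    rw [sum_neg_distrib] at h1
    simp only [pow_zero, Nat.choose_zero_right, Nat.cast_one, one_mul, Nat.cast_zero] at h1
    linear_combination -h1
  -- main computation
  unfold D
  rw [sum_range_succ']
  have h3 : ∀ j : ℕ, (-1 : ℂ) ^ (j + 1) * ((n + 1).choose (j + 1) : ℂ) * ((j + 1 : ℕ) : ℂ) ^ m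
      = -((-1 : ℂ) ^ j * (n.choose j : ℂ) * ((j : ℂ) + 1) ^ m)
        - (-1 : ℂ) ^ j * (n.choose (j + 1) : ℂ) * ((j : ℂ) + 1) ^ m := by
    intro j
    rw [Nat.choose_succ_succ]
    push_cast
    ring
  simp_rw [h3]
  rw [sum_sub_distrib, sum_neg_distrib, hA, hB, sum_range_succ]
  simp only [Nat.choose_self, Nat.choose_zero_right, Nat.cast_one, D, add_comm 1 n]
  ring

lemma D_eq_zero : ∀ n m : ℕ, m < n → D n m = 0 := by
  intro n
  induction n with
  | zero => omega
  | succ n ih =>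
    intro m hm
    rw [D_succ]
    rw [Finset.sum_eq_zero, neg_zero]
    intro t ht
    rw [ih t (by simp at ht; omega), mul_zero]

lemma halt (N : ℕ) : ∑ i ∈ range (N + 1), (-1 : ℂ) ^ i * (N.choose i : ℂ)
    = if N = 0 then 1 else 0 := by
  have h := Int.alternating_sum_range_choose (n := N)
  have h2 : ((∑ i ∈ range (N + 1), ((-1) ^ i * N.choose i : ℤ) : ℤ) : ℂ)
      = ((if N = 0 then 1 else 0 : ℤ) : ℂ) := congrArg (Int.cast : ℤ → ℂ) h
  push_cast at h2
  simpa using h2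

lemma inversion (m k : ℕ) :
    ∑ n ∈ range (k + 1), (-1 : ℂ) ^ n * D n m * (k.choose n : ℂ) = (k : ℂ) ^ m := by
  calc ∑ n ∈ range (k + 1), (-1 : ℂ) ^ n * D n m * (k.choose n : ℂ)
      = ∑ n ∈ Ico 0 (k + 1), ∑ j ∈ Ico 0 (n + 1),
          (-1 : ℂ) ^ n * ((-1) ^ j * (n.choose j : ℂ) * (j : ℂ) ^ m) * (k.choose n : ℂ) := by
        simp_rw [D, mul_sum, sum_mul, range_eq_Ico]
    _ = ∑ j ∈ Ico 0 (k + 1), ∑ n ∈ Ico j (k + 1),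
          (-1 : ℂ) ^ n * ((-1) ^ j * (n.choose j : ℂ) * (j : ℂ) ^ m) * (k.choose n : ℂ) := by
        rw [← sum_Ico_Ico_comm]
    _ = ∑ j ∈ range (k + 1), ((-1 : ℂ) ^ j * (j : ℂ) ^ m * (k.choose j : ℂ))
          * ((-1 : ℂ) ^ j * if k - j = 0 then 1 else 0) := by
        rw [← range_eq_Ico]
        refine sum_congr rfl fun j hj => ?_
        rw [mem_range] at hj
        have hsc : ∀ n ∈ Ico j (k + 1),
            (-1 : ℂ) ^ n * ((-1) ^ j * (n.choose j : ℂ) * (j : ℂ) ^ m) * (k.choose n : ℂ)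
            = ((-1 : ℂ) ^ j * (j : ℂ) ^ m * (k.choose j : ℂ))
              * ((-1 : ℂ) ^ n * ((k - j).choose (n - j) : ℂ)) := by
          intro n hn
          rw [mem_Ico] at hn
          have h1 : (k.choose n : ℂ) * (n.choose j : ℂ)
              = (k.choose j : ℂ) * ((k - j).choose (n - j) : ℂ) := by
            exact_mod_cast congrArg Nat.cast (Nat.choose_mul (n := k) hn.1)
          linear_combination ((-1 : ℂ) ^ n * (-1) ^ j * (j : ℂ) ^ m) * h1
        rw [sum_congr rfl hsc, ← mul_sum, sum_Ico_eq_sum_range]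
        congr 1
        have hk : k + 1 - j = (k - j) + 1 := by omega
        rw [hk]
        calc ∑ i ∈ range (k - j + 1), (-1 : ℂ) ^ (j + i) * ((k - j).choose (j + i - j) : ℂ)
            = (-1 : ℂ) ^ j * ∑ i ∈ range (k - j + 1), (-1 : ℂ) ^ i * ((k - j).choose i : ℂ) := by
              rw [mul_sum]
              refine sum_congr rfl fun i _ => ?_
              rw [Nat.add_sub_cancel_left, pow_add]
              ring
          _ = (-1 : ℂ) ^ j * if k - j = 0 then 1 else 0 := by rw [halt]
    _ = (k : ℂ) ^ m := by
        rw [Finset.sum_eq_single_of_mem k (self_mem_range_succ k)]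
        · rw [if_pos (by omega), mul_one, Nat.choose_self, Nat.cast_one, mul_one]
          have h : (-1 : ℂ) ^ k * (-1) ^ k = 1 := by rw [← mul_pow]; norm_num
          linear_combination ((k : ℂ) ^ m) * h
        · intro j hj hne
          rw [mem_range] at hj
          rw [if_neg (by omega)]
          ring

lemma stirling2_mul_factorial (m n : ℕ) :
    stirling2 m n * (n.factorial : ℂ) = (-1) ^ n * D n m := by
  have hf : (n.factorial : ℂ) ≠ 0 := by exact_mod_cast n.factorial_ne_zero
  rw [stirling2, mul_comm ((n.factorial : ℂ)⁻¹) _, mul_assoc, inv_mul_cancel₀ hf, mul_one, D,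
    mul_sum]
  refine sum_congr rfl fun j hj => ?_
  rw [mem_range] at hj
  have hs : (-1 : ℂ) ^ (n - j) = (-1) ^ n * (-1) ^ j := by
    conv_rhs => rw [← Nat.sub_add_cancel (by omega : j ≤ n)]
    rw [pow_add, mul_assoc, ← mul_pow]
    norm_num
  rw [hs]; ring

lemma stirling2_eq_zero {m n : ℕ} (h : m < n) : stirling2 m n = 0 := by
  have h1 := stirling2_mul_factorial m n
  rw [D_eq_zero n m h, mul_zero] at h1
  have hf : (n.factorial : ℂ) ≠ 0 := by exact_mod_cast n.factorial_ne_zero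
  exact (mul_eq_zero.mp h1).resolve_right hf

lemma key (m k : ℕ) :
    ∑ n ∈ range (m + 1), stirling2 m n * (n.factorial : ℂ) * (k.choose n : ℂ) = (k : ℂ) ^ m := by
  have h1 : ∑ n ∈ range (m + 1), stirling2 m n * (n.factorial : ℂ) * (k.choose n : ℂ)
      = ∑ n ∈ range (max m k + 1), stirling2 m n * (n.factorial : ℂ) * (k.choose n : ℂ) := by
    apply sum_subset (by intro y hy; simp at hy ⊢; omega)
    intro n hn1 hn2
    simp only [mem_range] at hn1 hn2
    rw [stirling2_eq_zero (by omega), zero_mul, zero_mul]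
  have h2 : ∑ n ∈ range (k + 1), stirling2 m n * (n.factorial : ℂ) * (k.choose n : ℂ)
      = ∑ n ∈ range (max m k + 1), stirling2 m n * (n.factorial : ℂ) * (k.choose n : ℂ) := by
    apply sum_subset (by intro y hy; simp at hy ⊢; omega)
    intro n hn1 hn2
    simp only [mem_range] at hn1 hn2
    rw [Nat.choose_eq_zero_of_lt (by omega), Nat.cast_zero, mul_zero]
  rw [h1, ← h2, ← inversion m k]
  exact sum_congr rfl fun n _ => by rw [stirling2_mul_factorial]

lemma hasSum_aux (n : ℕ) (x : ℂ) :
    HasSum (fun k : ℕ => (k.choose n : ℂ) * (n.factorial : ℂ) * x ^ k / (k.factorial : ℂ))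
      (x ^ n * Complex.exp x) := by
  have he : HasSum (fun i : ℕ => x ^ i / (i.factorial : ℂ)) (Complex.exp x) := by
    rw [Complex.exp_eq_exp_ℂ]
    exact NormedSpace.expSeries_div_hasSum_exp x
  have h2 := he.mul_left (x ^ n)
  have hvan : ∀ k ∉ Set.range (· + n),
      (k.choose n : ℂ) * (n.factorial : ℂ) * x ^ k / (k.factorial : ℂ) = 0 := by
    intro k hk
    have hkn : k < n := by
      by_contra h
      exact hk ⟨k - n, by show k - n + n = k; omega⟩
    rw [Nat.choose_eq_zero_of_lt hkn]
    simp
  refine (Function.Injective.hasSum_iff (add_left_injective n) hvan).mp ?_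
  have heq : ((fun k : ℕ => (k.choose n : ℂ) * (n.factorial : ℂ) * x ^ k / (k.factorial : ℂ))
      ∘ (· + n)) = fun i : ℕ => x ^ n * (x ^ i / (i.factorial : ℂ)) := by
    funext i
    simp only [Function.comp_apply]
    have h3n : (i + n).choose n * n.factorial * i.factorial = (i + n).factorial := by
      have h := Nat.choose_mul_factorial_mul_factorial (Nat.le_add_left n i)
      rwa [Nat.add_sub_cancel] at h
    have h3 : ((i + n).choose n : ℂ) * (n.factorial : ℂ) * (i.factorial : ℂ)
        = ((i + n).factorial : ℂ) := by exact_mod_cast congrArg Nat.cast h3n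
    have hi : (i.factorial : ℂ) ≠ 0 := by exact_mod_cast i.factorial_ne_zero
    have hin : (((i + n).factorial : ℕ) : ℂ) ≠ 0 := by exact_mod_cast (i + n).factorial_ne_zero
    field_simp
    linear_combination x ^ (i + n) * h3
  rw [heq]
  exact h2

/-- For every nonnegative integer `m` and complex `x`, the series
`∑ k, k^m x^k / k!` converges to `e^x * φ_m(x)`, where
`φ_m(x) = ∑ n in range (m+1), S(m,n) x^n` is the `m`-th exponential polynomial. -/
theorem hasSum_pow_mul_exp_eq_exponential_polynomial (m : ℕ) (x : ℂ) :
    HasSum (fun k : ℕ => (k : ℂ) ^ m * x ^ k / (k.factorial : ℂ))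
      (Complex.exp x * ∑ n ∈ range (m + 1), stirling2 m n * x ^ n) := by
  have H : HasSum (fun k : ℕ => ∑ n ∈ range (m + 1),
      stirling2 m n * ((k.choose n : ℂ) * (n.factorial : ℂ) * x ^ k / (k.factorial : ℂ)))
      (∑ n ∈ range (m + 1), stirling2 m n * (x ^ n * Complex.exp x)) :=
    hasSum_sum (fun n _ => (hasSum_aux n x).mul_left _)
  have hfun : (fun k : ℕ => ∑ n ∈ range (m + 1),
      stirling2 m n * ((k.choose n : ℂ) * (n.factorial : ℂ) * x ^ k / (k.factorial : ℂ)))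
      = fun k : ℕ => (k : ℂ) ^ m * x ^ k / (k.factorial : ℂ) := by
    funext k
    have : ∀ n ∈ range (m + 1),
        stirling2 m n * ((k.choose n : ℂ) * (n.factorial : ℂ) * x ^ k / (k.factorial : ℂ))
        = stirling2 m n * (n.factorial : ℂ) * (k.choose n : ℂ) * x ^ k / (k.factorial : ℂ) := by
      intro n _; ring
    rw [sum_congr rfl this]
    rw [← sum_div, ← sum_mul, key]
  have htgt : ∑ n ∈ range (m + 1), stirling2 m n * (x ^ n * Complex.exp x)
      = Complex.exp x * ∑ n ∈ range (m + 1), stirling2 m n * x ^ n := by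
    rw [mul_sum]
    exact sum_congr rfl fun n _ => by ring
  rw [hfun, htgt] at H
  exact H
end

section
/- For every nonnegative integer m and every complex number x with |x| < 1, the series Σ_{n=0}^{∞} n^m x^n converges and equals (1/(1−x)) · ω_m(x/(1−x)), where ω_m(z) = Σ_{n=0}^{m} S(m,n) · n! · z^n is the m-th geometric polynomial. -/
open Finset

/-- The `m`-th geometric polynomial `ω_m(z) = ∑ n ∈ range (m+1), S(m,n) n! z^n`. -/
noncomputable def geomPoly (m : ℕ) (z : ℂ) : ℂ :=
  ∑ n ∈ range (m + 1), stirling2 m n * (n.factorial : ℂ) * z ^ n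

/-- Auxiliary: the finite difference sum `k! S(m,k)`. -/
noncomputable def stirAux (m k : ℕ) : ℂ :=
  ∑ j ∈ range (k + 1), (-1) ^ (k - j) * (k.choose j : ℂ) * (j : ℂ) ^ m

lemma stirling2_mul_factorial_s13 (m k : ℕ) :
    stirling2 m k * (k.factorial : ℂ) = stirAux m k := by
  have h : (k.factorial : ℂ) ≠ 0 := by exact_mod_cast k.factorial_ne_zero
  rw [stirling2, stirAux, mul_comm, ← mul_assoc, mul_inv_cancel₀ h, one_mul]

lemma alt_sum_choose (n : ℕ) :
    ∑ i ∈ range (n + 1), (-1 : ℂ) ^ i * (n.choose i : ℂ) = if n = 0 then 1 else 0 := by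
  have h := @Int.alternating_sum_range_choose n
  have h2 : ((∑ m ∈ range (n + 1), (-1 : ℤ) ^ m * (n.choose m : ℤ) : ℤ) : ℂ)
      = ∑ i ∈ range (n + 1), (-1 : ℂ) ^ i * (n.choose i : ℂ) := by
    push_cast
    exact Finset.sum_congr rfl fun i _ => by ring
  rw [← h2, h]
  split <;> simp

lemma stirAux_eq_zero : ∀ m k, m < k → stirAux m k = 0 := by
  intro m
  induction m using Nat.strong_induction_on with
  | _ m ih =>
    intro k hk
    match m, ih with
    | 0, _ =>
      have hk0 : k ≠ 0 := by omega
      have h1 : stirAux 0 k = ∑ j ∈ range (k + 1), (-1 : ℂ) ^ (k - j) * (k.choose j : ℂ) := by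
        rw [stirAux]
        exact Finset.sum_congr rfl fun j _ => by rw [pow_zero, mul_one]
      have h2 : ∀ j ∈ range (k + 1),
          (-1 : ℂ) ^ (k - (k + 1 - 1 - j)) * (k.choose (k + 1 - 1 - j) : ℂ)
            = (-1 : ℂ) ^ j * (k.choose j : ℂ) := by
        intro j hj
        rw [Finset.mem_range] at hj
        have hj' : j ≤ k := by omega
        rw [show k + 1 - 1 - j = k - j by omega, show k - (k - j) = j by omega,
          Nat.choose_symm hj']
      rw [h1, ← Finset.sum_range_reflect, Finset.sum_congr rfl h2, alt_sum_choose, if_neg hk0]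
    | m + 1, ih =>
      obtain ⟨K, rfl⟩ : ∃ K, k = K + 1 := ⟨k - 1, by omega⟩
      have hK : m < K := by omega
      rw [stirAux, Finset.sum_range_succ']
      have h0 : (-1 : ℂ) ^ (K + 1 - 0) * (((K + 1).choose 0 : ℕ) : ℂ) * ((0 : ℕ) : ℂ) ^ (m + 1)
          = 0 := by simp
      rw [h0, add_zero]
      have hterm : ∀ i ∈ range (K + 1),
          (-1 : ℂ) ^ (K + 1 - (i + 1)) * (((K + 1).choose (i + 1) : ℕ) : ℂ)
              * (((i + 1 : ℕ)) : ℂ) ^ (m + 1)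
            = ((K : ℂ) + 1) * ((-1 : ℂ) ^ (K - i) * (K.choose i : ℂ) * ((i : ℂ) + 1) ^ m) := by
        intro i hi
        have hch : (((K + 1) * K.choose i : ℕ) : ℂ)
            = (((K + 1).choose (i + 1) * (i + 1) : ℕ) : ℂ) := by
          exact_mod_cast congrArg (Nat.cast (R := ℂ)) (Nat.add_one_mul_choose_eq K i)
        push_cast at hch ⊢
        calc (-1 : ℂ) ^ (K - i) * ((K + 1).choose (i + 1) : ℂ) * ((i : ℂ) + 1) ^ (m + 1)
            = (-1 : ℂ) ^ (K - i) * (((K + 1).choose (i + 1) : ℂ) * ((i : ℂ) + 1))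
                * ((i : ℂ) + 1) ^ m := by ring
          _ = ((K : ℂ) + 1) * ((-1 : ℂ) ^ (K - i) * (K.choose i : ℂ) * ((i : ℂ) + 1) ^ m) := by
              rw [← hch]; ring
      rw [Finset.sum_congr rfl hterm, ← Finset.mul_sum]
      have hsum : ∑ i ∈ range (K + 1),
          (-1 : ℂ) ^ (K - i) * (K.choose i : ℂ) * ((i : ℂ) + 1) ^ m
          = ∑ t ∈ range (m + 1), (m.choose t : ℂ) * stirAux t K := by
        calc ∑ i ∈ range (K + 1), (-1 : ℂ) ^ (K - i) * (K.choose i : ℂ) * ((i : ℂ) + 1) ^ m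
            = ∑ i ∈ range (K + 1), ∑ t ∈ range (m + 1),
                (m.choose t : ℂ) * ((-1 : ℂ) ^ (K - i) * (K.choose i : ℂ) * (i : ℂ) ^ t) := by
              refine Finset.sum_congr rfl fun i _ => ?_
              rw [add_pow, Finset.mul_sum]
              exact Finset.sum_congr rfl fun t _ => by ring
          _ = ∑ t ∈ range (m + 1), (m.choose t : ℂ) * stirAux t K := by
              rw [Finset.sum_comm]
              refine Finset.sum_congr rfl fun t _ => ?_
              rw [stirAux, Finset.mul_sum]
      rw [hsum]
      have hz : ∀ t ∈ range (m + 1), (m.choose t : ℂ) * stirAux t K = 0 := by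
        intro t ht
        rw [Finset.mem_range] at ht
        rw [ih t (by omega) K (by omega), mul_zero]
      rw [Finset.sum_congr rfl hz, Finset.sum_const_zero, mul_zero]

lemma inner_orthogonality {j n : ℕ} (hj : j ≤ n) :
    ∑ k ∈ range (n + 1), (-1 : ℂ) ^ (k - j) * (n.choose k : ℂ) * (k.choose j : ℂ)
      = if j = n then 1 else 0 := by
  have hsub : Ico j (n + 1) ⊆ range (n + 1) := by
    intro x hx; rw [Finset.mem_range]; rw [Finset.mem_Ico] at hx; omega
  have hzero : ∀ x ∈ range (n + 1), x ∉ Ico j (n + 1) →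
      (-1 : ℂ) ^ (x - j) * (n.choose x : ℂ) * (x.choose j : ℂ) = 0 := by
    intro x hx hnx
    rw [Finset.mem_range] at hx
    rw [Finset.mem_Ico] at hnx
    have : x < j := by omega
    rw [Nat.choose_eq_zero_of_lt this]
    simp
  rw [← Finset.sum_subset hsub hzero, Finset.sum_Ico_eq_sum_range,
    show n + 1 - j = (n - j) + 1 by omega]
  have hterm : ∀ i ∈ range ((n - j) + 1),
      (-1 : ℂ) ^ (j + i - j) * (n.choose (j + i) : ℂ) * ((j + i).choose j : ℂ)
        = (n.choose j : ℂ) * ((-1 : ℂ) ^ i * ((n - j).choose i : ℂ)) := by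
    intro i hi
    rw [Finset.mem_range] at hi
    have h1 : j + i ≤ n := by omega
    have h2 : j ≤ j + i := by omega
    have hc : ((n.choose (j + i) * (j + i).choose j : ℕ) : ℂ)
        = ((n.choose j * (n - j).choose (j + i - j) : ℕ) : ℂ) :=
      congrArg _ (Nat.choose_mul (n := n) h2)
    push_cast at hc
    rw [show j + i - j = i by omega] at hc ⊢
    rw [mul_assoc, hc]; ring
  rw [Finset.sum_congr rfl hterm, ← Finset.mul_sum, alt_sum_choose]
  by_cases h : j = n
  · subst h; simp
  · rw [if_neg h, if_neg (by omega : n - j ≠ 0), mul_zero]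

lemma stirAux_inversion (m n : ℕ) :
    ∑ k ∈ range (n + 1), (n.choose k : ℂ) * stirAux m k = (n : ℂ) ^ m := by
  have hstep1 : ∀ k ∈ range (n + 1),
      (n.choose k : ℂ) * stirAux m k
        = ∑ j ∈ range (n + 1),
            (n.choose k : ℂ) * ((-1 : ℂ) ^ (k - j) * (k.choose j : ℂ) * (j : ℂ) ^ m) := by
    intro k hk
    rw [Finset.mem_range] at hk
    rw [stirAux, Finset.mul_sum]
    refine Finset.sum_subset (by intro x hx; rw [Finset.mem_range] at *; omega) ?_
    intro x hx hnx
    rw [Finset.mem_range] at hx hnx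
    have : k < x := by omega
    rw [Nat.choose_eq_zero_of_lt this]
    simp
  rw [Finset.sum_congr rfl hstep1, Finset.sum_comm]
  have hstep2 : ∀ j ∈ range (n + 1),
      ∑ k ∈ range (n + 1),
          (n.choose k : ℂ) * ((-1 : ℂ) ^ (k - j) * (k.choose j : ℂ) * (j : ℂ) ^ m)
        = (if j = n then 1 else 0) * (j : ℂ) ^ m := by
    intro j hj
    rw [Finset.mem_range] at hj
    have := inner_orthogonality (n := n) (j := j) (by omega)
    calc ∑ k ∈ range (n + 1),
          (n.choose k : ℂ) * ((-1 : ℂ) ^ (k - j) * (k.choose j : ℂ) * (j : ℂ) ^ m)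
        = (∑ k ∈ range (n + 1),
            (-1 : ℂ) ^ (k - j) * (n.choose k : ℂ) * (k.choose j : ℂ)) * (j : ℂ) ^ m := by
          rw [Finset.sum_mul]
          exact Finset.sum_congr rfl fun k _ => by ring
      _ = (if j = n then 1 else 0) * (j : ℂ) ^ m := by rw [this]
  rw [Finset.sum_congr rfl hstep2]
  have hite : ∀ j ∈ range (n + 1),
      (if j = n then (1 : ℂ) else 0) * (j : ℂ) ^ m
        = if j = n then (j : ℂ) ^ m else 0 := by
    intro j _; split <;> simp
  rw [Finset.sum_congr rfl hite,
    Finset.sum_ite_eq' (range (n + 1)) n (fun j => ((j : ℕ) : ℂ) ^ m),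
    if_pos (Finset.self_mem_range_succ n)]

lemma pow_eq_sum_stirAux (m n : ℕ) :
    (n : ℂ) ^ m = ∑ k ∈ range (m + 1), stirAux m k * (n.choose k : ℂ) := by
  have h1 : ∑ k ∈ range (m + 1), stirAux m k * (n.choose k : ℂ)
      = ∑ k ∈ range (max m n + 1), stirAux m k * (n.choose k : ℂ) := by
    refine Finset.sum_subset (by intro y hy; rw [Finset.mem_range] at *; omega) ?_
    intro y hy hny
    rw [Finset.mem_range] at hy hny
    rw [stirAux_eq_zero m y (by omega), zero_mul]
  have h2 : ∑ k ∈ range (max m n + 1), stirAux m k * (n.choose k : ℂ)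
      = ∑ k ∈ range (n + 1), stirAux m k * (n.choose k : ℂ) := by
    symm
    refine Finset.sum_subset (by intro y hy; rw [Finset.mem_range] at *; omega) ?_
    intro y hy hny
    rw [Finset.mem_range] at hy hny
    rw [Nat.choose_eq_zero_of_lt (by omega), Nat.cast_zero, mul_zero]
  rw [h1, h2, ← stirAux_inversion m n]
  exact Finset.sum_congr rfl fun k _ => by ring

lemma hasSum_choose_geom (k : ℕ) {x : ℂ} (hx : ‖x‖ < 1) :
    HasSum (fun n : ℕ => (n.choose k : ℂ) * x ^ n) (x ^ k * ((1 - x)⁻¹) ^ (k + 1)) := by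
  have h := (hasSum_choose_mul_geometric_of_norm_lt_one k hx).mul_left (x ^ k)
  have hfun : (fun n : ℕ => x ^ k * (((n + k).choose k : ℂ) * x ^ n))
      = fun n : ℕ => ((n + k).choose k : ℂ) * x ^ (n + k) := by
    funext n; rw [pow_add]; ring
  rw [hfun] at h
  have h2 := (hasSum_nat_add_iff (f := fun n : ℕ => (n.choose k : ℂ) * x ^ n) k).mp h
  have hz : ∑ i ∈ range k, (i.choose k : ℂ) * x ^ i = 0 := by
    refine Finset.sum_eq_zero fun i hi => ?_
    rw [Finset.mem_range] at hi
    rw [Nat.choose_eq_zero_of_lt hi, Nat.cast_zero, zero_mul]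
  rw [hz, add_zero] at h2
  rw [one_div, ← inv_pow] at h2
  exact h2

/-- For every nonnegative integer `m` and every complex `x` with `|x| < 1`,
the series `∑ n, n^m x^n` converges and equals `(1/(1-x)) * ω_m(x/(1-x))`. -/
theorem hasSum_pow_mul_geom_eq_geometric_polynomial (m : ℕ) (x : ℂ) (hx : ‖x‖ < 1) :
    HasSum (fun n : ℕ => (n : ℂ) ^ m * x ^ n)
      ((1 - x)⁻¹ * geomPoly m (x / (1 - x))) := by
  have hsum : HasSum (fun n : ℕ => ∑ k ∈ range (m + 1),
      stirAux m k * ((n.choose k : ℂ) * x ^ n))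
      (∑ k ∈ range (m + 1), stirAux m k * (x ^ k * ((1 - x)⁻¹) ^ (k + 1))) :=
    hasSum_sum fun k _ => (hasSum_choose_geom k hx).mul_left (stirAux m k)
  have hfun : (fun n : ℕ => (n : ℂ) ^ m * x ^ n)
      = fun n : ℕ => ∑ k ∈ range (m + 1), stirAux m k * ((n.choose k : ℂ) * x ^ n) := by
    funext n
    rw [pow_eq_sum_stirAux m n, Finset.sum_mul]
    exact Finset.sum_congr rfl fun k _ => by ring
  rw [hfun]
  convert hsum using 1
  rw [geomPoly, Finset.mul_sum]
  refine Finset.sum_congr rfl fun k hk => ?_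
  rw [← stirling2_mul_factorial_s13, div_eq_mul_inv]
  ring
end

section
/- For every complex number t with |t| < π, 2/(e^t + 1) = Σ_{m=0}^{∞} ω_m(−1/2) · t^m / m!, where ω_m(−1/2) = Σ_{n=0}^{m} S(m,n) · n! · (−1)^n / 2^n and the series converges. -/
open Finset
open scoped NNReal ENNReal

namespace GPaux

/-- Signed sum `A m n = ∑_{k≤n} (-1)^k C(n,k) k^m` over ℝ. -/
def A (m n : ℕ) : ℝ := ∑ k ∈ range (n + 1), (-1) ^ k * (n.choose k : ℝ) * (k : ℝ) ^ m

lemma A_zero (n : ℕ) : A 0 n = if n = 0 then 1 else 0 := by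
  have h := Int.alternating_sum_range_choose (n := n)
  have h2 : ((∑ i ∈ range (n+1), (-1)^i * (n.choose i : ℤ) : ℤ) : ℝ) = A 0 n := by
    push_cast [A]
    exact Finset.sum_congr rfl fun k _ => by ring
  rw [← h2, h]
  split <;> simp

lemma A_succ_zero (m : ℕ) : A (m+1) 0 = 0 := by
  simp [A]

lemma A_succ_succ (m n : ℕ) : A (m+1) (n+1) = ((n:ℝ)+1) * (A m (n+1) - A m n) := by
  have key : ∀ i : ℕ, (((n+1).choose (i+1) : ℝ)) * ((i:ℝ)+1) = ((n:ℝ)+1) * (n.choose i : ℝ) := by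
    intro i
    have h : ((n+1) * n.choose i : ℕ) = ((n+1).choose (i+1) * (i+1) : ℕ) := Nat.add_one_mul_choose_eq n i
    exact_mod_cast (congrArg (fun x : ℕ => (x : ℝ)) h).symm
  set W : ℝ := ∑ i ∈ range (n+1), (-1)^i * (n.choose i : ℝ) * ((i:ℝ)+1)^m with hW
  set V : ℝ := ∑ i ∈ range (n+1), (-1)^i * (n.choose (i+1) : ℝ) * ((i:ℝ)+1)^m with hVdef
  have hA1 : A (m+1) (n+1) = -(((n:ℝ)+1)) * W := by
    rw [A, Finset.sum_range_succ']
    simp only [Nat.cast_zero, pow_zero, one_mul, Nat.choose_zero_right, Nat.cast_one,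
      zero_pow (Nat.succ_ne_zero m), mul_zero, add_zero]
    rw [hW, Finset.mul_sum]
    refine Finset.sum_congr rfl fun i _ => ?_
    have hk := key i
    have hp : ((i:ℝ)+1)^(m+1) = ((i:ℝ)+1)^m * ((i:ℝ)+1) := pow_succ _ _
    push_cast
    rw [hp]
    linear_combination (-(-1:ℝ)^i * ((i:ℝ)+1)^m) * hk
  have hV : V = (0:ℝ)^m - A m n := by
    rw [hVdef, Finset.sum_range_succ, Nat.choose_succ_self]
    simp only [Nat.cast_zero, mul_zero, zero_mul, add_zero]
    have hAn : A m n = ∑ i ∈ range n, (-1:ℝ)^(i+1) * (n.choose (i+1) : ℝ) * ((i:ℝ)+1)^m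
        + (0:ℝ)^m := by
      rw [A, Finset.sum_range_succ']
      push_cast
      simp
    rw [hAn]
    have hterm : ∀ x ∈ range n, (-1:ℝ)^(x+1) * (n.choose (x+1):ℝ) * ((x:ℝ)+1)^m
        = -((-1)^x * (n.choose (x+1):ℝ) * ((x:ℝ)+1)^m) := fun x _ => by ring
    rw [Finset.sum_congr rfl hterm, Finset.sum_neg_distrib]
    ring
  have hA2 : A m (n+1) = -W - V + (0:ℝ)^m := by
    rw [A, Finset.sum_range_succ']
    have hterm : ∀ i ∈ range (n+1), (-1:ℝ)^(i+1) * (((n+1).choose (i+1)):ℝ) * (((i+1:ℕ)):ℝ)^m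
        = -((-1)^i * (n.choose i:ℝ) * ((i:ℝ)+1)^m) - ((-1)^i * (n.choose (i+1):ℝ) * ((i:ℝ)+1)^m) := by
      intro i _
      have hp : ((n+1).choose (i+1) : ℝ) = (n.choose i : ℝ) + (n.choose (i+1) : ℝ) := by
        exact_mod_cast congrArg (Nat.cast : ℕ → ℝ) (Nat.choose_succ_succ n i)
      push_cast
      rw [hp]; ring
    rw [Finset.sum_congr rfl hterm, Finset.sum_sub_distrib, Finset.sum_neg_distrib]
    rw [hW, hVdef]
    simp [Nat.choose_zero_right]
  have hW2 : W = A m n - A m (n+1) := by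
    rw [hA2, hV]; ring
  rw [hA1, hW2]; ring

lemma A_bound : ∀ m n : ℕ, 0 ≤ (-1:ℝ)^n * A m n ∧ (-1:ℝ)^n * A m n ≤ (2*(n:ℝ))^m
    ∧ (m < n → A m n = 0) := by
  intro m
  induction m with
  | zero =>
    intro n
    rw [A_zero]
    rcases Nat.eq_zero_or_pos n with h | h
    · subst h; norm_num
    · rw [if_neg (Nat.pos_iff_ne_zero.mp h)]
      refine ⟨by simp, by simp, fun _ => rfl⟩
  | succ m ih =>
    intro n
    match n with
    | 0 =>
      rw [A_succ_zero]
      refine ⟨by simp, by norm_num, fun h => by omega⟩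
    | (n+1) =>
      obtain ⟨h1, h2, h3⟩ := ih (n+1)
      obtain ⟨h1', h2', h3'⟩ := ih n
      rw [A_succ_succ]
      have hsign : (-1:ℝ)^(n+1) * (((n:ℝ)+1) * (A m (n+1) - A m n))
          = ((n:ℝ)+1) * ((-1)^(n+1) * A m (n+1) + (-1)^n * A m n) := by
        rw [pow_succ]; ring
      have hn1 : (0:ℝ) ≤ ((n:ℝ)+1) := by positivity
      refine ⟨?_, ?_, ?_⟩
      · rw [hsign]; positivity
      · rw [hsign]
        push_cast
        have hle : (2*(n:ℝ))^m ≤ (2*((n:ℝ)+1))^m := by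
          apply pow_le_pow_left₀ (by positivity) (by linarith)
        calc ((n:ℝ)+1) * ((-1)^(n+1) * A m (n+1) + (-1)^n * A m n)
            ≤ ((n:ℝ)+1) * ((2*((n:ℝ)+1))^m + (2*((n:ℝ)+1))^m) := by
              apply mul_le_mul_of_nonneg_left _ hn1
              push_cast at h2 ⊢
              linarith
          _ = ((n:ℝ)+1) * (2 * (2*((n:ℝ)+1))^m) := by ring
          _ ≤ (2*((n:ℝ)+1))^(m+1) := by rw [pow_succ]; nlinarith [pow_nonneg (by positivity : (0:ℝ) ≤ 2*((n:ℝ)+1)) m]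
      · intro h
        rw [h3 (by omega), h3' (by omega)]
        ring


/-- `Tr m n = (-1)^n A m n = ∑_k (-1)^(n-k) C(n,k) k^m`. -/
noncomputable def Tr (m n : ℕ) : ℝ := (-1)^n * A m n

lemma Tr_nonneg (m n : ℕ) : 0 ≤ Tr m n := (A_bound m n).1

lemma Tr_le (m n : ℕ) : Tr m n ≤ (2*(n:ℝ))^m := (A_bound m n).2.1

lemma Tr_eq_zero {m n : ℕ} (h : m < n) : Tr m n = 0 := by
  rw [Tr, (A_bound m n).2.2 h, mul_zero]

lemma neg_one_pow_sub {R : Type*} [Monoid R] [HasDistribNeg R] {k n : ℕ} (h : k ≤ n) :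
    (-1:R)^(n-k) = (-1)^n * (-1)^k := by
  have h1 : (-1:R)^(n-k) * (-1)^k = (-1)^n := by rw [← pow_add]; congr 1; omega
  have h2 : ((-1:R)^k) * ((-1)^k) = 1 := by
    rw [← pow_add, ← two_mul, pow_mul]; simp
  calc (-1:R)^(n-k) = (-1)^(n-k) * ((-1)^k * (-1)^k) := by rw [h2, mul_one]
    _ = ((-1)^(n-k) * (-1)^k) * (-1)^k := by rw [mul_assoc]
    _ = (-1)^n * (-1)^k := by rw [h1]

lemma stirlingSum_eq (m n : ℕ) :
    ∑ k ∈ range (n + 1), ((-1:ℂ)) ^ (n - k) * (n.choose k : ℂ) * (k : ℂ) ^ m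
      = ((Tr m n : ℝ) : ℂ) := by
  rw [Tr, A]
  push_cast
  rw [Finset.mul_sum]
  refine Finset.sum_congr rfl fun k hk => ?_
  have hk' : k ≤ n := Nat.lt_succ_iff.mp (mem_range.mp hk)
  rw [neg_one_pow_sub (R := ℂ) hk']
  ring

lemma stirling2_mul (m n : ℕ) :
    stirling2 m n * (n.factorial : ℂ) = ((Tr m n : ℝ) : ℂ) := by
  rw [stirling2, stirlingSum_eq, mul_comm ((n.factorial : ℂ))⁻¹, mul_assoc,
    inv_mul_cancel₀ (by exact_mod_cast Nat.factorial_ne_zero n), mul_one]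

lemma geomPoly_eq (m : ℕ) (z : ℂ) :
    geomPoly m z = ∑ n ∈ range (m+1), ((Tr m n : ℝ) : ℂ) * z ^ n :=
  Finset.sum_congr rfl fun n _ => by rw [stirling2_mul]


lemma hasSum_exp (x : ℂ) : HasSum (fun m => x^m / (m.factorial : ℂ)) (Complex.exp x) := by
  rw [Complex.exp_eq_exp_ℂ]; exact NormedSpace.expSeries_div_hasSum_exp x

lemma norm_neg_half : ‖(-1/2 : ℂ)‖ = 1/2 := by
  rw [show (-1/2:ℂ) = ((-1/2:ℝ):ℂ) by norm_num, Complex.norm_real, Real.norm_eq_abs]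
  norm_num

lemma hasSum_fiber_n (t : ℂ) (n : ℕ) :
    HasSum (fun m => ((Tr m n : ℝ):ℂ) * (-1/2)^n * t^m / (m.factorial : ℂ))
      (((Complex.exp t - 1) * (-1/2))^n) := by
  have base : ∀ k ∈ range (n+1), HasSum
      (fun m => ((-1:ℂ))^(n-k) * (n.choose k : ℂ) * (-1/2)^n * (((k:ℂ)*t)^m / (m.factorial:ℂ)))
      (((-1:ℂ))^(n-k) * (n.choose k : ℂ) * (-1/2)^n * Complex.exp ((k:ℂ)*t)) :=
    fun k _ => (hasSum_exp _).mul_left _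
  have hsum := hasSum_sum base
  have hfun : (fun m => ((Tr m n : ℝ):ℂ) * (-1/2)^n * t^m / (m.factorial:ℂ))
      = fun m => ∑ k ∈ range (n+1),
          ((-1:ℂ))^(n-k) * (n.choose k : ℂ) * (-1/2)^n * (((k:ℂ)*t)^m / (m.factorial:ℂ)) := by
    funext m
    rw [← stirlingSum_eq m n, Finset.sum_mul, Finset.sum_mul, Finset.sum_div]
    exact Finset.sum_congr rfl fun k _ => by rw [mul_pow]; ring
  have hval : ∑ k ∈ range (n+1),
      ((-1:ℂ))^(n-k) * (n.choose k : ℂ) * (-1/2)^n * Complex.exp ((k:ℂ)*t)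
      = ((Complex.exp t - 1) * (-1/2))^n := by
    rw [mul_pow, sub_pow, Finset.sum_mul]
    refine Finset.sum_congr rfl fun k hk => ?_
    have hk' : k ≤ n := Nat.lt_succ_iff.mp (mem_range.mp hk)
    rw [neg_one_pow_sub (R := ℂ) hk', pow_add, Complex.exp_nat_mul, one_pow]
    ring
  rw [hfun, ← hval]
  exact hsum

lemma hasSum_fiber_m (t : ℂ) (m : ℕ) :
    HasSum (fun n => ((Tr m n : ℝ):ℂ) * (-1/2)^n * t^m / (m.factorial : ℂ))
      (geomPoly m (-1/2) * t^m / (m.factorial : ℂ)) := by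
  have hvan : ∀ n ∉ range (m+1), ((Tr m n:ℝ):ℂ) * (-1/2)^n * t^m/(m.factorial:ℂ) = 0 := by
    intro n hn
    have hmn : m < n := by simp [mem_range] at hn; omega
    rw [Tr_eq_zero hmn]
    simp
  have h := hasSum_sum_of_ne_finset_zero (L := SummationFilter.unconditional ℕ) hvan
  convert h using 1
  rw [geomPoly_eq, Finset.sum_mul, Finset.sum_div]

lemma summable_norm_G {t : ℂ} (ht : ‖t‖ < 1/3) :
    Summable (fun p : ℕ×ℕ =>
      ‖((Tr p.2 p.1:ℝ):ℂ) * (-1/2:ℂ)^p.1 * t^p.2 / ((p.2).factorial:ℂ)‖) := by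
  have hexp2 : Real.exp (2*‖t‖) < 2 := by
    have h1 : Real.exp (2*‖t‖) < Real.exp (Real.log 2) := by
      apply Real.exp_lt_exp.mpr
      nlinarith [Real.log_two_gt_d9, norm_nonneg t]
    rwa [Real.exp_log (by norm_num : (0:ℝ) < 2)] at h1
  have hb : Summable (fun p : ℕ×ℕ => (2*(p.1:ℝ)*‖t‖)^p.2 / ((p.2).factorial : ℝ) * (1/2)^p.1) := by
    have hpos : 0 ≤ (fun p : ℕ×ℕ => (2*(p.1:ℝ)*‖t‖)^p.2 / ((p.2).factorial : ℝ) * (1/2)^p.1) := by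
      intro p
      have h0 : (0:ℝ) ≤ 2*(p.1:ℝ)*‖t‖ := by positivity
      positivity
    apply (summable_prod_of_nonneg hpos).2
    refine ⟨fun n => ?_, ?_⟩
    · dsimp only
      exact (Real.summable_pow_div_factorial _).mul_right _
    · dsimp only
      have htsum : ∀ n:ℕ, (∑' m:ℕ, (2*(n:ℝ)*‖t‖)^m / (m.factorial:ℝ) * (1/2)^n)
          = (Real.exp (2*‖t‖) * (1/2))^n := by
        intro n
        have h := ((NormedSpace.expSeries_div_hasSum_exp (2*(n:ℝ)*‖t‖)).mul_right ((1/2:ℝ)^n)).tsum_eq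
        rw [h, ← Real.exp_eq_exp_ℝ, show 2*(n:ℝ)*‖t‖ = (n:ℝ)*(2*‖t‖) by ring,
          Real.exp_nat_mul, mul_pow]
      rw [funext htsum]
      apply summable_geometric_of_lt_one (by positivity)
      nlinarith
  apply Summable.of_nonneg_of_le (fun p => norm_nonneg _) ?_ hb
  intro p
  obtain ⟨n, m⟩ := p
  simp only
  rw [norm_div, norm_mul, norm_mul, norm_pow, norm_pow, norm_neg_half,
    Complex.norm_real, Complex.norm_natCast, Real.norm_eq_abs, abs_of_nonneg (Tr_nonneg m n)]
  have h1 : Tr m n ≤ (2*(n:ℝ))^m := Tr_le m n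
  calc Tr m n * (1/2)^n * ‖t‖^m / (m.factorial:ℝ)
      = Tr m n * ‖t‖^m / (m.factorial:ℝ) * (1/2)^n := by ring
    _ ≤ (2*(n:ℝ))^m * ‖t‖^m / (m.factorial:ℝ) * (1/2)^n := by gcongr
    _ = (2*(n:ℝ)*‖t‖)^m / (m.factorial:ℝ) * (1/2)^n := by ring

lemma key_hasSum {t : ℂ} (ht : ‖t‖ < 1/3) :
    HasSum (fun m => geomPoly m (-1/2) * t^m / (m.factorial:ℂ)) (2/(Complex.exp t + 1)) := by
  set G : ℕ×ℕ → ℂ :=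
    fun p => ((Tr p.2 p.1:ℝ):ℂ) * (-1/2)^p.1 * t^p.2 / ((p.2).factorial:ℂ) with hGdef
  have hsum : Summable G := Summable.of_norm (summable_norm_G ht)
  have hG : HasSum G (∑' p, G p) := hsum.hasSum
  have hgeom : HasSum (fun n => ((Complex.exp t - 1) * (-1/2))^n) (∑' p, G p) :=
    hG.prod_fiberwise (fun n => hasSum_fiber_n t n)
  have hratio : ‖(Complex.exp t - 1) * (-1/2:ℂ)‖ < 1 := by
    rw [norm_mul, norm_neg_half]
    have h1 : ‖Complex.exp t - 1‖ ≤ 2 * ‖t‖ := by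
      have := Complex.norm_exp_sub_one_le (x := t) (by linarith)
      exact this
    nlinarith [norm_nonneg (Complex.exp t - 1)]
  have hgeom' := hasSum_geometric_of_norm_lt_one hratio
  have hne2 : Complex.exp t + 1 ≠ 0 := by
    intro h
    have hexp : Complex.exp t = -1 := by linear_combination h
    rw [hexp, show ((-1:ℂ) - 1) * (-1/2) = 1 by ring] at hratio
    simp at hratio
  have hval : (∑' p, G p) = 2/(Complex.exp t + 1) := by
    rw [hgeom.unique hgeom']
    rw [show (1:ℂ) - (Complex.exp t - 1) * (-1/2) = (Complex.exp t + 1)/2 by ring]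
    rw [div_eq_mul_inv, mul_inv, inv_inv]
    field_simp
  have hGswap : HasSum (fun p : ℕ×ℕ => G (p.2, p.1)) (∑' p, G p) :=
    ((Equiv.prodComm ℕ ℕ).hasSum_iff).mpr hG
  have final := hGswap.prod_fiberwise (fun m => hasSum_fiber_m t m)
  rwa [hval] at final


lemma exp_add_one_ne_zero {z : ℂ} (hz : ‖z‖ < Real.pi) : Complex.exp z + 1 ≠ 0 := by
  intro h
  have hexp : Complex.exp z = -1 := by linear_combination h
  have h2 : Complex.exp (z + z) = 1 := by rw [Complex.exp_add, hexp]; ring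
  rw [Complex.exp_eq_one_iff] at h2
  obtain ⟨k, hk⟩ := h2
  have hzk : z = (k:ℂ) * Real.pi * Complex.I := by linear_combination hk / 2
  have hk0 : k ≠ 0 := by
    intro h0
    have hz0 : z = 0 := by rw [hzk, h0]; simp
    rw [hz0, Complex.exp_zero] at hexp
    exact (by norm_num : (1:ℂ) ≠ -1) hexp
  have hnorm : ‖z‖ = |(k:ℝ)| * Real.pi := by
    rw [hzk, norm_mul, norm_mul, Complex.norm_I, mul_one,
      Complex.norm_intCast, Complex.norm_real, Real.norm_eq_abs,
      abs_of_nonneg Real.pi_pos.le]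
  have : (1:ℝ) ≤ |(k:ℝ)| := by
    have : (1:ℤ) ≤ |k| := Int.one_le_abs hk0
    exact_mod_cast this
  nlinarith [Real.pi_pos]

theorem main (t : ℂ) (ht : ‖t‖ < Real.pi) :
    HasSum (fun m : ℕ => geomPoly m (-1 / 2) * t ^ m / (m.factorial : ℂ))
      (2 / (Complex.exp t + 1)) := by
  set f : ℂ → ℂ := fun z => 2 / (Complex.exp z + 1) with hf
  set c : ℕ → ℂ := fun m => geomPoly m (-1/2) / (m.factorial : ℂ) with hc
  set q := FormalMultilinearSeries.ofScalars ℂ c with hq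
  have hterm : ∀ (s : ℂ) (m : ℕ), geomPoly m (-1/2) * s^m / (m.factorial:ℂ) = c m * s^m := by
    intro s m; rw [hc]; ring
  have hkey : ∀ {s : ℂ}, ‖s‖ < 1/3 → HasSum (fun m => c m * s^m) (f s) := by
    intro s hs
    have h := key_hasSum hs
    simpa only [hterm] using h
  -- small ball power series
  have hq_at : HasFPowerSeriesAt f q 0 := by
    refine ⟨((1/4 : ℝ≥0) : ℝ≥0∞), ?_, by norm_num, ?_⟩
    · apply FormalMultilinearSeries.le_radius_of_summable
      have h14 : ‖(1/4 : ℂ)‖ = (1/4 : ℝ) := by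
        rw [show (1/4:ℂ) = ((1/4:ℝ):ℂ) by norm_num, Complex.norm_real, Real.norm_eq_abs]
        norm_num
      have h := (hkey (s := (1/4 : ℂ)) (by rw [h14]; norm_num)).summable
      have h2 : Summable (fun m => ‖c m * (1/4:ℂ)^m‖) := summable_norm_iff.mpr h
      apply h2.congr
      intro m
      rw [norm_mul, norm_pow, h14, FormalMultilinearSeries.ofScalars_norm]
      norm_num
    · intro y hy
      rw [mem_emetric_ball_zero_iff, enorm_eq_nnnorm, ENNReal.coe_lt_coe] at hy
      have hy' : ‖y‖ < 1/3 := by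
        have : ‖y‖ < (1/4 : ℝ) := by
          have := hy
          rw [← NNReal.coe_lt_coe] at this
          simpa [coe_nnnorm] using this
        linarith
      have := hkey hy'
      simp only [FormalMultilinearSeries.ofScalars_apply_eq, smul_eq_mul, zero_add, hq]
      exact this
  -- big ball
  set R : ℝ := (‖t‖ + Real.pi)/2 with hR
  have hpi := Real.pi_pos
  have htR : ‖t‖ < R := by rw [hR]; linarith
  have hRpi : R < Real.pi := by rw [hR]; linarith
  have hR0 : 0 < R := lt_of_le_of_lt (norm_nonneg t) htR
  set RN : ℝ≥0 := R.toNNReal with hRN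
  have hRNR : (RN : ℝ) = R := Real.coe_toNNReal _ hR0.le
  have hdiff : DifferentiableOn ℂ f (Metric.closedBall 0 (RN:ℝ)) := by
    apply DifferentiableOn.div (differentiableOn_const 2)
    · exact (Complex.differentiable_exp.differentiableOn).add_const 1
    · intro z hz
      apply exp_add_one_ne_zero
      have := Metric.mem_closedBall.mp hz
      rw [dist_zero_right] at this
      rw [hRNR] at this
      linarith
  have hball := hdiff.hasFPowerSeriesOnBall (by rw [← Real.toNNReal_pos] at hR0; exact hR0)
  have heq : cauchyPowerSeries f 0 (RN:ℝ) = q :=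
    hball.hasFPowerSeriesAt.eq_formalMultilinearSeries hq_at
  rw [heq] at hball
  have ht' : t ∈ Metric.eball (0:ℂ) RN := by
    rw [mem_emetric_ball_zero_iff, enorm_eq_nnnorm, ENNReal.coe_lt_coe, ← NNReal.coe_lt_coe, coe_nnnorm, hRNR]
    exact htR
  have hfinal := hball.hasSum ht'
  simp only [FormalMultilinearSeries.ofScalars_apply_eq, smul_eq_mul, zero_add, hq] at hfinal
  have : (fun m : ℕ => geomPoly m (-1 / 2) * t ^ m / (m.factorial : ℂ)) = fun m => c m * t^m := by
    funext m; exact hterm t m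
  rw [this]
  exact hfinal


end GPaux

/-- For every complex `t` with `|t| < π`, the series `∑ m, ω_m(-1/2) t^m / m!`
converges and its sum is `2 / (e^t + 1)`, where
`ω_m(-1/2) = ∑ n ∈ range (m+1), S(m,n) n! (-1)^n / 2^n`. -/
theorem geomPoly_half_generating_function (t : ℂ) (ht : ‖t‖ < Real.pi) :
    HasSum (fun m : ℕ => geomPoly m (-1 / 2) * t ^ m / (m.factorial : ℂ))
      (2 / (Complex.exp t + 1)) := GPaux.main t ht
end

section
/- For every nonnegative integer m, the m-th Bernoulli number satisfies B_m = Σ_{n=0}^{m} (−1)^n · (n!/(n+1)) · S(m,n), where the Bernoulli numbers are those of the generating function t/(e^t − 1) = Σ_{m≥0} B_m t^m/m! (so B_1 = −1/2). -/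
open Finset

noncomputable def AA (n m : ℕ) : ℂ :=
  ∑ k ∈ range (n + 1), (-1) ^ k * (n.choose k : ℂ) * (k : ℂ) ^ m

lemma AA_shift (n m : ℕ) :
    ∑ k ∈ range (n + 1), (-1) ^ k * (n.choose k : ℂ) * ((k : ℂ) + 1) ^ m
      = AA n m - AA (n + 1) m := by
  have h : AA (n + 1) m
      = ∑ k ∈ range (n + 1),
          (-1) ^ (k+1) * ((n+1).choose (k+1) : ℂ) * ((k:ℂ)+1) ^ m
        + (-1) ^ 0 * ((n+1).choose 0 : ℂ) * ((0:ℕ) : ℂ) ^ m := by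
    rw [AA, Finset.sum_range_succ' (fun k => (-1) ^ k * ((n+1).choose k : ℂ) * (k : ℂ) ^ m) (n+1)]
    push_cast
    ring_nf
  have pascal : ∀ k, (((n+1).choose (k+1) : ℂ)) = (n.choose k : ℂ) + (n.choose (k+1) : ℂ) := by
    intro k
    rw [Nat.choose_succ_succ]
    push_cast; ring
  rw [h]
  have h2 : ∑ k ∈ range (n + 1),
      (-1) ^ (k+1) * ((n+1).choose (k+1) : ℂ) * ((k:ℂ)+1) ^ m
      = -(∑ k ∈ range (n + 1), (-1) ^ k * (n.choose k : ℂ) * ((k : ℂ) + 1) ^ m)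
        + ∑ k ∈ range (n + 1), (-1) ^ (k+1) * (n.choose (k+1) : ℂ) * ((k:ℂ)+1) ^ m := by
    rw [← Finset.sum_neg_distrib, ← Finset.sum_add_distrib]
    refine Finset.sum_congr rfl fun k _ => ?_
    rw [pascal]; ring
  have h3 : ∑ k ∈ range (n + 1), (-1) ^ (k+1) * (n.choose (k+1) : ℂ) * ((k:ℂ)+1) ^ m
      + (-1) ^ 0 * ((n+1).choose 0 : ℂ) * ((0:ℕ) : ℂ) ^ m = AA n m := by
    rw [AA, Finset.sum_range_succ' (fun k => (-1) ^ k * (n.choose k : ℂ) * (k : ℂ) ^ m) n]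
    rw [Finset.sum_range_succ]
    simp [Nat.choose_succ_self]
  rw [h2]
  linear_combination h3

lemma AA_rec (n m : ℕ) :
    AA (n + 1) (m + 1) = -((n : ℂ) + 1) * (AA n m - AA (n + 1) m) := by
  have h : AA (n + 1) (m + 1)
      = ∑ k ∈ range (n + 1),
          (-1) ^ (k+1) * ((n+1).choose (k+1) : ℂ) * ((k:ℂ)+1) ^ (m+1) := by
    rw [AA, Finset.sum_range_succ'
      (fun k => (-1) ^ k * ((n+1).choose k : ℂ) * (k : ℂ) ^ (m+1)) (n+1)]
    simp
  rw [h, ← AA_shift n m, Finset.mul_sum]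
  refine Finset.sum_congr rfl fun k _ => ?_
  have hc : ((n:ℂ)+1) * (n.choose k : ℂ) = ((n+1).choose (k+1) : ℂ) * ((k:ℂ)+1) := by
    have := Nat.add_one_mul_choose_eq n k
    have : ((n.succ * n.choose k : ℕ) : ℂ) = ((n.succ.choose k.succ * k.succ : ℕ) : ℂ) := by
      exact_mod_cast congrArg (Nat.cast : ℕ → ℂ) this
    push_cast at this
    exact this
  calc (-1:ℂ) ^ (k+1) * ((n+1).choose (k+1) : ℂ) * ((k:ℂ)+1) ^ (m+1)
      = -((-1) ^ k * (((n+1).choose (k+1) : ℂ) * ((k:ℂ)+1)) * ((k:ℂ)+1) ^ m) := by ring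
    _ = -((n:ℂ)+1) * ((-1) ^ k * (n.choose k : ℂ) * ((k:ℂ)+1) ^ m) := by rw [← hc]; ring

lemma AA_zero_right (n : ℕ) : AA n 0 = if n = 0 then 1 else 0 := by
  have := @Int.alternating_sum_range_choose n
  have h : ((∑ i ∈ range (n + 1), (-1) ^ i * (n.choose i : ℤ) : ℤ) : ℂ)
      = ((if n = 0 then (1:ℤ) else 0 : ℤ) : ℂ) := congrArg (Int.cast : ℤ → ℂ) this
  push_cast at h
  rw [AA]
  simpa using h

lemma AA_eq_zero : ∀ m n : ℕ, m < n → AA n m = 0 := by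
  intro m
  induction m with
  | zero =>
    intro n hn
    rw [AA_zero_right]
    rw [if_neg (by omega)]
  | succ m ih =>
    intro n hn
    obtain ⟨n', rfl⟩ : ∃ n', n = n' + 1 := ⟨n - 1, by omega⟩
    rw [AA_rec, ih n' (by omega), ih (n' + 1) (by omega)]
    ring

lemma AA_zero_left (M : ℕ) : AA 0 M = if M = 0 then 1 else 0 := by
  simp [AA, zero_pow_eq]

lemma AA_telescope (M : ℕ) :
    ∑ n ∈ range (M + 1), AA (n + 1) (M + 1) / ((n : ℂ) + 1)
      = -(if M = 0 then 1 else 0) := by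
  have h : ∀ n, AA (n + 1) (M + 1) / ((n : ℂ) + 1) = AA (n + 1) M - AA n M := by
    intro n
    rw [AA_rec]
    have : ((n : ℂ) + 1) ≠ 0 := Nat.cast_add_one_ne_zero n
    field_simp
    ring
  simp_rw [h]
  rw [Finset.sum_range_sub (fun n => AA n M) (M + 1)]
  rw [AA_eq_zero M (M + 1) (by omega), AA_zero_left]
  ring_nf

noncomputable def gg (m : ℕ) : ℂ := ∑ n ∈ range (m + 1), AA n m / ((n : ℂ) + 1)

lemma binom_sum (k N : ℕ) :
    ∑ m ∈ range N, (N.choose m : ℂ) * (k : ℂ) ^ m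
      = ((k : ℂ) + 1) ^ N - (k : ℂ) ^ N := by
  have h := add_pow (k : ℂ) 1 N
  rw [Finset.sum_range_succ] at h
  simp at h
  rw [eq_sub_iff_add_eq, h]
  congr 1
  exact Finset.sum_congr rfl fun m _ => by ring

lemma gg_rec (N : ℕ) :
    ∑ m ∈ range N, (N.choose m : ℂ) * gg m = if N = 1 then 1 else 0 := by
  rcases Nat.eq_zero_or_pos N with rfl | hN
  · simp
  obtain ⟨M, rfl⟩ : ∃ M, N = M + 1 := ⟨N - 1, by omega⟩
  have hg : ∀ m ∈ range (M + 1), (((M+1).choose m : ℂ)) * gg m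
      = ∑ n ∈ range (M + 1), ((M+1).choose m : ℂ) * (AA n m / ((n : ℂ) + 1)) := by
    intro m hm
    have hm' := Finset.mem_range.mp hm
    have hgg : gg m = ∑ n ∈ range (M + 1), AA n m / ((n : ℂ) + 1) := by
      rw [gg]
      refine Finset.sum_subset (Finset.range_subset_range.mpr (by omega)) fun n _ hn => ?_
      rw [AA_eq_zero m n (by have := Finset.mem_range.not.mp hn; omega)]
      simp
    rw [hgg, Finset.mul_sum]
  rw [Finset.sum_congr rfl hg, Finset.sum_comm]
  have hinner : ∀ n ∈ range (M + 1),
      ∑ m ∈ range (M + 1), ((M+1).choose m : ℂ) * (AA n m / ((n : ℂ) + 1))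
        = -AA (n + 1) (M + 1) / ((n : ℂ) + 1) := by
    intro n _
    have h1 : ∑ m ∈ range (M + 1), ((M+1).choose m : ℂ) * AA n m
        = -AA (n + 1) (M + 1) := by
      simp_rw [AA, Finset.mul_sum]
      rw [Finset.sum_comm]
      have h2 : ∀ k ∈ range (n + 1),
          ∑ m ∈ range (M + 1), ((M+1).choose m : ℂ) * ((-1) ^ k * (n.choose k : ℂ) * (k : ℂ) ^ m)
            = (-1) ^ k * (n.choose k : ℂ) * (((k:ℂ)+1) ^ (M+1) - (k:ℂ) ^ (M+1)) := by
        intro k _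
        have := binom_sum k (M + 1)
        calc ∑ m ∈ range (M + 1), ((M+1).choose m : ℂ) * ((-1) ^ k * (n.choose k : ℂ) * (k : ℂ) ^ m)
            = (-1) ^ k * (n.choose k : ℂ) * ∑ m ∈ range (M + 1), ((M+1).choose m : ℂ) * (k : ℂ) ^ m := by
              rw [Finset.mul_sum]; exact Finset.sum_congr rfl fun m _ => by ring
          _ = _ := by rw [this]
      rw [Finset.sum_congr rfl h2]
      have h3 : ∑ k ∈ range (n + 1),
          (-1) ^ k * (n.choose k : ℂ) * (((k:ℂ)+1) ^ (M+1) - (k:ℂ) ^ (M+1))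
          = (∑ k ∈ range (n + 1), (-1) ^ k * (n.choose k : ℂ) * ((k:ℂ)+1) ^ (M+1))
            - ∑ k ∈ range (n + 1), (-1) ^ k * (n.choose k : ℂ) * (k:ℂ) ^ (M+1) := by
        rw [← Finset.sum_sub_distrib]
        exact Finset.sum_congr rfl fun k _ => by ring
      rw [h3, AA_shift]
      show _ = -AA (n+1) (M+1)
      rw [AA]
      ring
    calc ∑ m ∈ range (M + 1), ((M+1).choose m : ℂ) * (AA n m / ((n : ℂ) + 1))
        = (∑ m ∈ range (M + 1), ((M+1).choose m : ℂ) * AA n m) / ((n : ℂ) + 1) := by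
          rw [Finset.sum_div]; exact Finset.sum_congr rfl fun m _ => by ring
      _ = _ := by rw [h1]
  rw [Finset.sum_congr rfl hinner]
  have : ∑ n ∈ range (M + 1), -AA (n + 1) (M + 1) / ((n : ℂ) + 1)
      = -∑ n ∈ range (M + 1), AA (n + 1) (M + 1) / ((n : ℂ) + 1) := by
    rw [← Finset.sum_neg_distrib]
    exact Finset.sum_congr rfl fun n _ => by ring
  rw [this, AA_telescope]
  by_cases hM : M = 0 <;> simp [hM]

lemma bern_rec (N : ℕ) :
    ∑ k ∈ range N, (N.choose k : ℂ) * ((bernoulli k : ℚ) : ℂ)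
      = if N = 1 then 1 else 0 := by
  have h := sum_bernoulli N
  have h2 : ((∑ k ∈ range N, (N.choose k : ℚ) * bernoulli k : ℚ) : ℂ)
      = ((if N = 1 then (1:ℚ) else 0 : ℚ) : ℂ) := congrArg _ h
  push_cast at h2
  rcases eq_or_ne N 1 with h1 | h1
  · simp only [h1, if_true] at h2 ⊢; exact_mod_cast h2
  · simp only [h1, if_false] at h2 ⊢; exact_mod_cast h2

lemma bern_eq_gg (m : ℕ) : ((bernoulli m : ℚ) : ℂ) = gg m := by
  induction m using Nat.strong_induction_on with
  | _ m ih =>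
    have h1 := bern_rec (m + 1)
    have h2 := gg_rec (m + 1)
    rw [Finset.sum_range_succ] at h1 h2
    have hsum : ∑ k ∈ range m, ((m+1).choose k : ℂ) * ((bernoulli k : ℚ) : ℂ)
        = ∑ k ∈ range m, ((m+1).choose k : ℂ) * gg k :=
      Finset.sum_congr rfl fun k hk => by rw [ih k (Finset.mem_range.mp hk)]
    have hc : (((m+1).choose m : ℂ)) ≠ 0 := by
      rw [Nat.choose_succ_self_right]
      exact_mod_cast Nat.succ_ne_zero m
    have key : ((m+1).choose m : ℂ) * ((bernoulli m : ℚ) : ℂ)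
        = ((m+1).choose m : ℂ) * gg m := by
      linear_combination h1 - h2 - hsum
    exact mul_left_cancel₀ hc key

/-- For every nonnegative integer `m`, the `m`-th Bernoulli number (with the
convention `B₁ = -1/2`, i.e. the generating function `t/(e^t - 1)`, which is
Mathlib's `bernoulli`) satisfies
`B_m = ∑ n in range (m+1), (-1)^n * (n!/(n+1)) * S(m,n)`. -/
theorem bernoulli_eq_sum_stirling2 (m : ℕ) :
    (bernoulli m : ℂ) =
      ∑ n ∈ range (m + 1),
        (-1) ^ n * ((n.factorial : ℂ) / ((n : ℂ) + 1)) * stirling2 m n := by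
  rw [bern_eq_gg, gg]
  refine Finset.sum_congr rfl fun n _ => ?_
  have hsigma : ∑ k ∈ range (n+1), (-1:ℂ)^(n-k) * (n.choose k : ℂ) * (k:ℂ)^m
      = (-1:ℂ)^n * AA n m := by
    rw [AA, Finset.mul_sum]
    refine Finset.sum_congr rfl fun k hk => ?_
    have hk' := Nat.lt_succ_iff.mp (Finset.mem_range.mp hk)
    have h : (-1:ℂ)^(n-k) * (-1)^k = (-1)^n := by
      rw [← pow_add]; congr 1; omega
    have hkk : (-1:ℂ)^k * (-1)^k = 1 := by
      rw [← mul_pow]; norm_num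
    have h2 : (-1:ℂ)^(n-k) = (-1)^n * (-1)^k := by
      calc (-1:ℂ)^(n-k) = (-1)^(n-k) * ((-1)^k * (-1)^k) := by rw [hkk, mul_one]
        _ = ((-1)^(n-k) * (-1)^k) * (-1)^k := by ring
        _ = (-1)^n * (-1)^k := by rw [h]
    rw [h2]; ring
  rw [stirling2, hsigma]
  have hfac : (n.factorial : ℂ) ≠ 0 := Nat.cast_ne_zero.mpr n.factorial_ne_zero
  have hn1 : ((n:ℂ)+1) ≠ 0 := Nat.cast_add_one_ne_zero n
  have hnn : (-1:ℂ)^n * (-1)^n = 1 := by rw [← mul_pow]; norm_num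
  have hstep : (-1:ℂ)^n * ((n.factorial : ℂ)/((n:ℂ)+1)) * ((n.factorial : ℂ)⁻¹ * ((-1:ℂ)^n * AA n m))
      = ((-1:ℂ)^n * (-1)^n) * ((n.factorial : ℂ) * (n.factorial : ℂ)⁻¹) * (AA n m / ((n:ℂ)+1)) := by
    ring
  rw [hstep, hnn, mul_inv_cancel₀ hfac, one_mul, one_mul]
end
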